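/- Let G be a star-like graph with m ≥ 2 branches, with compact component K and branch images L_1, …, L_m, and let J be the Jacobi operator on ℓ²(V; ℂ) determined by Jacobi data (a, b) on G. Fix 1 ≤ i ≤ m, and let W ⊆ ℓ²(V; ℂ) be a subspace with J(W) ⊆ W such that every ψ ∈ W vanishes identically on ⋃_{j ≠ i} L_j (in particular ψ(φ_j(0)) = 0 for all j ≠ i). Then W is finite-dimensional. -/

import Mathlib

/-- A star-like graph with `m` branches. -/
structure StarLike {V : Type*} (G : SimpleGraph V) (m : ℕ) where
  K : Finset V
  φ : Fin m → ℕ → V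
  connected : G.Connected
  locFin : ∀ v : V, (G.neighborSet v).Finite
  φ_inj : ∀ i, Function.Injective (φ i)
  cover : ∀ v : V, v ∈ K ∨ ∃ i n, v = φ i n
  branch_disjoint : ∀ i j, i ≠ j → ∀ p q, φ i p ≠ φ j q
  branch_inter_K : ∀ i n, φ i n ∈ K ↔ n = 0
  adj_branch : ∀ i (j : ℕ), 1 ≤ j → ∀ w, G.Adj (φ i j) w ↔ w = φ i (j - 1) ∨ w = φ i (j + 1)
  adj_base : ∀ i w, G.Adj (φ i 0) w → w ∈ K ∨ w = φ i 1

/-- Jacobi data on a graph `G`: bounded symmetric positive edge weights and a bounded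
potential. -/
structure JacobiData {V : Type*} (G : SimpleGraph V) where
  a : V → V → ℝ
  b : V → ℝ
  symm : ∀ u v, a u v = a v u
  pos : ∀ u v, G.Adj u v → 0 < a u v
  a_bdd : ∃ C, ∀ u v, G.Adj u v → |a u v| ≤ C
  b_bdd : ∃ C, ∀ v, |b v| ≤ C

namespace Stmt7Aux

open SimpleGraph

variable {V : Type*} {G : SimpleGraph V} {m : ℕ}

/-- The neighbor finset. -/
noncomputable def nbr (S : StarLike G m) (u : V) : Finset V := (S.locFin u).toFinset

lemma mem_nbr (S : StarLike G m) {u w : V} : w ∈ nbr S u ↔ G.Adj u w := by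
  simp [nbr, Set.Finite.mem_toFinset]

/-- The iterated kernel of the Jacobi operator. -/
noncomputable def ker (S : StarLike G m) (D : JacobiData G) : ℕ → V → V → ℝ
  | 0, u, v => haveI := Classical.decEq V; if u = v then 1 else 0
  | (k+1), u, v => (∑ w ∈ nbr S u, D.a u w * ker S D k w v) + D.b u * ker S D k u v

/-- Finite "balls" containing the support of the kernel. -/
noncomputable def ball (S : StarLike G m) : ℕ → V → Finset V
  | 0, u => {u}
  | (k+1), u =>
      haveI := Classical.decEq V
      ball S k u ∪ (nbr S u).biUnion (fun w => ball S k w)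

lemma subset_ball_left (S : StarLike G m) (k : ℕ) (u : V) :
    ball S k u ⊆ ball S (k+1) u := by
  classical
  intro x hx
  simp only [ball, Finset.mem_union]
  left
  convert hx

lemma subset_ball_nbr (S : StarLike G m) (k : ℕ) {u w : V} (hw : w ∈ nbr S u) :
    ball S k w ⊆ ball S (k+1) u := by
  classical
  intro x hx
  simp only [ball, Finset.mem_union, Finset.mem_biUnion]
  right
  exact ⟨w, hw, by convert hx⟩

lemma ker_eq_zero_of_not_mem_ball (S : StarLike G m) (D : JacobiData G) :
    ∀ (k : ℕ) (u v : V), v ∉ ball S k u → ker S D k u v = 0 := by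
  classical
  intro k
  induction k with
  | zero =>
    intro u v hv
    have : u ≠ v := by
      intro h; subst h; exact hv (by simp [ball])
    simp [ker, this]
  | succ k ih =>
    intro u v hv
    have hv1 : v ∉ ball S k u := fun h => hv (subset_ball_left S k u h)
    have hv2' : ∀ w ∈ nbr S u, v ∉ ball S k w := fun w hw h => hv (subset_ball_nbr S k hw h)
    show (∑ w ∈ nbr S u, D.a u w * ker S D k w v) + D.b u * ker S D k u v = 0
    rw [Finset.sum_eq_zero (fun w hw => by rw [ih w v (hv2' w hw), mul_zero]),
      ih u v hv1, mul_zero, add_zero]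

lemma walk_of_ker_ne_zero (S : StarLike G m) (D : JacobiData G) :
    ∀ (k : ℕ) (u v : V), ker S D k u v ≠ 0 → ∃ p : G.Walk u v, p.length ≤ k := by
  intro k
  induction k with
  | zero =>
    intro u v h
    by_cases huv : u = v
    · subst huv; exact ⟨SimpleGraph.Walk.nil, by simp⟩
    · exact absurd (by simp [ker, huv]) h
  | succ k ih =>
    intro u v h
    by_contra hno
    push_neg at hno
    apply h
    have hz1 : ker S D k u v = 0 := by
      by_contra h'
      obtain ⟨p, hp⟩ := ih u v h'
      have := hno p
      omega
    have hz2 : ∀ w ∈ nbr S u, ker S D k w v = 0 := by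
      intro w hw
      by_contra h'
      obtain ⟨p, hp⟩ := ih w v h'
      have := hno (SimpleGraph.Walk.cons ((mem_nbr S).mp hw) p)
      rw [SimpleGraph.Walk.length_cons] at this
      omega
    show (∑ w ∈ nbr S u, D.a u w * ker S D k w v) + D.b u * ker S D k u v = 0
    rw [Finset.sum_eq_zero (fun w hw => by rw [hz2 w hw, mul_zero]), hz1, mul_zero, add_zero]

lemma ker_eq_zero_of_lt_dist (S : StarLike G m) (D : JacobiData G)
    {k : ℕ} {u v : V} (h : k < G.dist u v) : ker S D k u v = 0 := by
  by_contra h'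
  obtain ⟨p, hp⟩ := walk_of_ker_ne_zero S D k u v h'
  have := SimpleGraph.dist_le p
  omega

lemma ker_pos (S : StarLike G m) (D : JacobiData G) (hc : G.Connected) :
    ∀ (k : ℕ) (u v : V), G.dist u v = k → 0 < ker S D k u v := by
  intro k
  induction k with
  | zero =>
    intro u v h
    have huv : u = v := by
      rcases SimpleGraph.dist_eq_zero_iff_eq_or_not_reachable.mp h with h' | h'
      · exact h'
      · exact absurd (hc u v) h'
    subst huv
    simp [ker]
  | succ k ih =>
    intro u v h
    obtain ⟨p, hp⟩ := hc.exists_walk_length_eq_dist u v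
    rw [h] at hp
    cases p with
    | nil => simp at hp
    | @cons _ w _ hadj q =>
      have hqlen : q.length = k := by simpa using hp
      have haux : ∀ x, G.Adj u x → k ≤ G.dist x v := by
        intro x hx
        by_contra hlt
        push_neg at hlt
        obtain ⟨r, hr⟩ := (hc x v).exists_walk_length_eq_dist
        have := SimpleGraph.dist_le (SimpleGraph.Walk.cons hx r)
        rw [SimpleGraph.Walk.length_cons, hr] at this
        omega
      have hnonneg : ∀ x ∈ nbr S u, 0 ≤ D.a u x * ker S D k x v := by
        intro x hx
        have hadjx := (mem_nbr S).mp hx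
        rcases lt_or_eq_of_le (haux x hadjx) with hlt | heq
        · rw [ker_eq_zero_of_lt_dist S D hlt, mul_zero]
        · exact le_of_lt (mul_pos (D.pos u x hadjx) (ih x v heq.symm))
      have hwd : G.dist w v = k := by
        have h1 : G.dist w v ≤ k := hqlen ▸ SimpleGraph.dist_le q
        have h2 := haux w hadj
        omega
      have hterm : 0 < D.a u w * ker S D k w v :=
        mul_pos (D.pos u w hadj) (ih w v hwd)
      have hsum : 0 < ∑ x ∈ nbr S u, D.a u x * ker S D k x v :=
        Finset.sum_pos' hnonneg ⟨w, (mem_nbr S).mpr hadj, hterm⟩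
      have hker0 : ker S D k u v = 0 :=
        ker_eq_zero_of_lt_dist S D (by omega)
      show 0 < (∑ x ∈ nbr S u, D.a u x * ker S D k x v) + D.b u * ker S D k u v
      rw [hker0, mul_zero, add_zero]
      exact hsum

/-- Any walk from outside the deep part of branch `i` to `φ i (n+1)` passes `φ i n`. -/
lemma pass (S : StarLike G m) (i : Fin m) (n : ℕ) :
    ∀ (u v : V) (p : G.Walk u v), v = S.φ i (n+1) →
      (∀ l, n+1 ≤ l → u ≠ S.φ i l) → S.φ i n ∈ p.support := by
  intro u v p
  induction p with
  | nil =>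
    intro hv hu
    exact absurd hv (hu (n+1) le_rfl)
  | @cons u w v hadj q ih =>
    intro hv hu
    by_cases hw : ∀ l, n+1 ≤ l → w ≠ S.φ i l
    · rw [SimpleGraph.Walk.support_cons]
      exact List.mem_cons_of_mem _ (ih hv hw)
    · push_neg at hw
      obtain ⟨l, hl, rfl⟩ := hw
      have hadj' : G.Adj (S.φ i l) u := hadj.symm
      rcases (S.adj_branch i l (by omega) u).mp hadj' with h1 | h1
      · have hln : l = n+1 := by
          rcases Nat.lt_or_ge (l-1) (n+1) with h2 | h2
          · omega
          · exact absurd h1 (hu (l-1) h2)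
        have hun : u = S.φ i n := by
          rw [h1, hln]
          norm_num
        rw [SimpleGraph.Walk.support_cons, hun]
        exact List.mem_cons_self
      · exact absurd h1 (hu (l+1) (by omega))

lemma dist_succ (S : StarLike G m) (i : Fin m) {u0 : V}
    (h0 : ∀ l, u0 ≠ S.φ i l) (n : ℕ) :
    G.dist u0 (S.φ i n) < G.dist u0 (S.φ i (n+1)) := by
  classical
  obtain ⟨p, hp⟩ := S.connected.exists_walk_length_eq_dist u0 (S.φ i (n+1))
  have hmem : S.φ i n ∈ p.support := pass S i n u0 _ p rfl (fun l _ => h0 l)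
  have h1 : G.dist u0 (S.φ i n) ≤ (p.takeUntil _ hmem).length := SimpleGraph.dist_le _
  have h2 : (p.takeUntil _ hmem).length + (p.dropUntil _ hmem).length = p.length := by
    have := congrArg SimpleGraph.Walk.length (p.take_spec hmem)
    rwa [SimpleGraph.Walk.length_append] at this
  have h3 : (p.dropUntil _ hmem).length ≠ 0 := by
    intro h
    have heq := SimpleGraph.Walk.eq_of_length_eq_zero h
    have := S.φ_inj i heq
    omega
  omega

end Stmt7Aux

open Stmt7Aux

theorem stmt_7 {V : Type*} (G : SimpleGraph V) (m : ℕ) (hm : 2 ≤ m)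
    (S : StarLike G m) (D : JacobiData G)
    (J : lp (fun _ : V => ℂ) 2 →L[ℂ] lp (fun _ : V => ℂ) 2)
    (hJ : ∀ (ψ : lp (fun _ : V => ℂ) 2) (v : V),
      J ψ v = (∑ w ∈ (S.locFin v).toFinset, (D.a v w : ℂ) * ψ w) + (D.b v : ℂ) * ψ v)
    (i : Fin m) (W : Submodule ℂ (lp (fun _ : V => ℂ) 2)) (hW : ∀ ψ ∈ W, J ψ ∈ W)
    (hvan : ∀ ψ ∈ W, ∀ j : Fin m, j ≠ i → ∀ n : ℕ, ψ (S.φ j n) = 0) :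
    FiniteDimensional ℂ W := by
  classical
  haveI : Nontrivial (Fin m) := ⟨⟨⟨0, by omega⟩, ⟨1, by omega⟩, by simp [Fin.ext_iff]⟩⟩
  obtain ⟨j, hji⟩ := exists_ne i
  set u0 := S.φ j 0 with hu0
  have h0 : ∀ l, u0 ≠ S.φ i l := fun l => S.branch_disjoint j i hji 0 l
  -- Key vanishing lemma
  have key : ∀ ψ : lp (fun _ : V => ℂ) 2, ψ ∈ W → (∀ v ∈ S.K, ψ v = 0) → ∀ v, ψ v = 0 := by
    intro ψ hmem hK
    set ψs : ℕ → lp (fun _ : V => ℂ) 2 := fun k => (fun x => J x)^[k] ψ with hψs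
    have hssucc : ∀ k, ψs (k+1) = J (ψs k) := fun k => Function.iterate_succ_apply' _ _ _
    have hsW : ∀ k, ψs k ∈ W := by
      intro k
      induction k with
      | zero => exact hmem
      | succ k ih => rw [hssucc]; exact hW _ ih
    -- expansion of the iterates by the kernel
    have hexp : ∀ (k : ℕ) (u : V),
        ψs k u = ∑ v ∈ ball S k u, (ker S D k u v : ℂ) * ψ v := by
      intro k
      induction k with
      | zero =>
        intro u
        show ψ u = _
        simp [ball, ker]
      | succ k ih =>
        intro u
        have hball1 : ∀ w ∈ nbr S u,
            ψs k w = ∑ v ∈ ball S (k+1) u, (ker S D k w v : ℂ) * ψ v := by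
          intro w hw
          rw [ih w]
          exact Finset.sum_subset (subset_ball_nbr S k hw)
            (fun v _ hv => by rw [ker_eq_zero_of_not_mem_ball S D k w v hv]; simp)
        have hball2 : ψs k u = ∑ v ∈ ball S (k+1) u, (ker S D k u v : ℂ) * ψ v := by
          rw [ih u]
          exact Finset.sum_subset (subset_ball_left S k u)
            (fun v _ hv => by rw [ker_eq_zero_of_not_mem_ball S D k u v hv]; simp)
        rw [hssucc k, hJ]
        have : ∀ v ∈ ball S (k+1) u, (ker S D (k+1) u v : ℂ) * ψ v
            = (∑ w ∈ nbr S u, (D.a u w : ℂ) * ((ker S D k w v : ℂ) * ψ v))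
              + (D.b u : ℂ) * ((ker S D k u v : ℂ) * ψ v) := by
          intro v _
          show (((∑ w ∈ nbr S u, D.a u w * ker S D k w v) + D.b u * ker S D k u v : ℝ) : ℂ) * ψ v = _
          push_cast
          rw [add_mul, Finset.sum_mul]
          congr 1
          · exact Finset.sum_congr rfl (fun w _ => by ring)
          · ring
        rw [Finset.sum_congr rfl this, Finset.sum_add_distrib, Finset.sum_comm, ← Finset.mul_sum,
          ← hball2]
        congr 1
        exact Finset.sum_congr rfl (fun w hw => by rw [← Finset.mul_sum, ← hball1 w hw])
    have heq : ∀ k : ℕ, ∑ v ∈ ball S k u0, (ker S D k u0 v : ℂ) * ψ v = 0 := by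
      intro k
      rw [← hexp k u0]
      exact hvan (ψs k) (hsW k) j hji 0
    -- vanishing on branch i by strong induction
    have hbranch : ∀ n, ψ (S.φ i n) = 0 := by
      intro n
      induction n using Nat.strong_induction_on with
      | _ n ih =>
        cases n with
        | zero => exact hK _ ((S.branch_inter_K i 0).mpr rfl)
        | succ n =>
          set k := G.dist u0 (S.φ i (n+1)) with hk
          have hpos : 0 < ker S D k u0 (S.φ i (n+1)) :=
            ker_pos S D S.connected k u0 _ hk.symm
          have hmem' : S.φ i (n+1) ∈ ball S k u0 := by
            by_contra hcon
            rw [ker_eq_zero_of_not_mem_ball S D _ _ _ hcon] at hpos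
            exact lt_irrefl 0 hpos
          have h := heq k
          rw [Finset.sum_eq_single_of_mem _ hmem' ?side] at h
          · rcases mul_eq_zero.mp h with h' | h'
            · exact absurd h' (by exact_mod_cast hpos.ne')
            · exact h'
          case side =>
            intro v hv hne
            rcases S.cover v with hvK | ⟨l, r, rfl⟩
            · rw [hK v hvK, mul_zero]
            · by_cases hl : l = i
              · subst hl
                rcases Nat.lt_or_ge r (n+2) with hr | hr
                · have hrne : r ≠ n+1 := fun hcon => hne (by rw [hcon])
                  rcases Nat.eq_zero_or_pos r with rfl | hrpos
                  · rw [hK _ ((S.branch_inter_K l 0).mpr rfl), mul_zero]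
                  · rw [ih r (by omega), mul_zero]
                · have hmono : StrictMono (fun t => G.dist u0 (S.φ l t)) :=
                    strictMono_nat_of_lt_succ (dist_succ S l h0)
                  have hgt : k < G.dist u0 (S.φ l r) := hmono (by omega : n+1 < r)
                  rw [ker_eq_zero_of_lt_dist S D hgt]
                  simp
              · rw [hvan ψ hmem l hl r, mul_zero]
    intro v
    rcases S.cover v with hvK | ⟨l, r, rfl⟩
    · exact hK v hvK
    · by_cases hl : l = i
      · subst hl; exact hbranch r
      · exact hvan ψ hmem l hl r
  -- embed W into functions on K
  let Φ : W →ₗ[ℂ] (S.K → ℂ) :=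
    { toFun := fun ψ v => (ψ : lp (fun _ : V => ℂ) 2) (v : V)
      map_add' := by
        intro ψ₁ ψ₂
        funext v
        simp [lp.coeFn_add]
      map_smul' := by
        intro c ψ
        funext v
        simp [lp.coeFn_smul] }
  have hinj : Function.Injective Φ := by
    rw [← LinearMap.ker_eq_bot, eq_bot_iff]
    intro ψ hψ
    have hψ0 : ∀ v : S.K, (ψ : lp (fun _ : V => ℂ) 2) (v : V) = 0 := fun v => congrFun hψ v
    have hzero : ∀ v, (ψ : lp (fun _ : V => ℂ) 2) v = 0 :=
      key _ ψ.2 (fun v hv => hψ0 ⟨v, hv⟩)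
    rw [Submodule.mem_bot]
    exact Subtype.ext (lp.ext (funext fun v => by simp [hzero v]))
  exact FiniteDimensional.of_injective Φ hinj
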